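/- Define Δ(x_1, …, x_n) = ∏_{1 ≤ i < j ≤ n} (x_j − x_i). Then for any positive integers n, l and strictly increasing positive integers i_1 < i_2 < ⋯ < i_l, one has Δ(1, …, n, n+i_1, …, n+i_l) / Δ(1, …, n, n+1, …, n+l) = [ ∏_{j=1}^{l} Δ(1,…,n, n+i_j) / Δ(1,…,n, n+j) ] · Δ(n+i_1, …, n+i_l) / Δ(n+1, …, n+l). -/

import Mathlib

/-- The Vandermonde product `Δ(x_1, …, x_n) = ∏_{1 ≤ i < j ≤ n} (x_j − x_i)` of a
list of rationals. -/
def vprod : List ℚ → ℚ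
  | [] => 1
  | x :: xs => ((xs.map (fun y => y - x)).prod) * vprod xs

/-- The list `1, 2, …, n`. -/
def baseList (n : ℕ) : List ℚ := (List.range n).map (fun t => ((t : ℚ) + 1))

lemma list_prod_range (n : ℕ) (f : ℕ → ℚ) :
    ((List.range n).map f).prod = ∏ k ∈ Finset.range n, f k := by
  induction n with
  | zero => simp
  | succ m ih =>
    rw [List.range_succ, List.map_append, List.prod_append, Finset.prod_range_succ, ih]; simp

lemma flatMap_single {α β : Type*} (f : α → β) (l : List α) :
    (l.flatMap fun a => [f a]) = l.map f := by
  induction l with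
  | nil => rfl
  | cons x xs ih => simp [List.flatMap_cons, ih]

lemma baseList_eq (n : ℕ) : baseList n = (List.range n).map (fun t : ℕ => ((t : ℚ) + 1)) := by
  show List.map (fun t => t + 1) (List.flatMap (fun a : ℕ => [((a : ℚ))]) (List.range n)) = _
  rw [flatMap_single, List.map_map]
  rfl

lemma base_map_prod (n : ℕ) (f : ℚ → ℚ) :
    ((baseList n).map f).prod = ∏ k ∈ Finset.range n, f ((k : ℚ) + 1) := by
  rw [baseList_eq, List.map_map, list_prod_range]
  rfl

lemma vprod_append (A B : List ℚ) :
    vprod (A ++ B) = vprod A * vprod B *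
      (A.map (fun a => (B.map (fun b => b - a)).prod)).prod := by
  induction A with
  | nil => simp [vprod]
  | cons x A ih =>
    rw [List.cons_append,
      show vprod (x :: (A ++ B)) = ((A ++ B).map (fun y => y - x)).prod * vprod (A ++ B) from rfl,
      ih, List.map_append, List.prod_append,
      show vprod (x :: A) = (A.map (fun y => y - x)).prod * vprod A from rfl]
    simp only [List.map_cons, List.prod_cons]
    ring

lemma vprod_pos (L : List ℚ) (h : L.Pairwise (· < ·)) : 0 < vprod L := by
  induction L with
  | nil => norm_num [vprod]
  | cons x xs ih =>
    rw [List.pairwise_cons] at h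
    have h1 : 0 < (xs.map (fun y => y - x)).prod := by
      apply List.prod_pos
      intro z hz
      simp only [List.mem_map] at hz
      obtain ⟨y, hy, rfl⟩ := hz
      linarith [h.1 y hy]
    exact mul_pos h1 (ih h.2)

theorem stmt10 (n l : ℕ) (hn : 0 < n) (hl : 0 < l)
    (i : Fin l → ℕ) (hi : StrictMono i) (hipos : ∀ t, 0 < i t) :
    vprod (baseList n ++ List.ofFn (fun t : Fin l => ((n : ℚ) + i t))) /
        vprod (baseList n ++ List.ofFn (fun t : Fin l => ((n : ℚ) + (t : ℕ) + 1))) =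
      (∏ t : Fin l,
          vprod (baseList n ++ [((n : ℚ) + i t)]) /
            vprod (baseList n ++ [((n : ℚ) + (t : ℕ) + 1)])) *
        (vprod (List.ofFn (fun t : Fin l => ((n : ℚ) + i t))) /
          vprod (List.ofFn (fun t : Fin l => ((n : ℚ) + (t : ℕ) + 1)))) := by
  set B := vprod (baseList n) with hB
  have hBpos : 0 < B := by
    apply vprod_pos
    rw [baseList_eq, List.pairwise_map]
    refine List.Pairwise.imp ?_ (List.pairwise_lt_range (n := n))
    intro a b hab
    have : ((a : ℚ)) < b := by exact_mod_cast hab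
    linarith
  have hLstd : (List.ofFn (fun t : Fin l => ((n : ℚ) + (t : ℕ) + 1))).Pairwise (· < ·) := by
    rw [List.pairwise_ofFn]
    intro a b hab
    have : ((a : ℕ) : ℚ) < ((b : ℕ) : ℚ) := by exact_mod_cast (hab : (a : ℕ) < b)
    linarith
  have hLi : (List.ofFn (fun t : Fin l => ((n : ℚ) + i t))).Pairwise (· < ·) := by
    rw [List.pairwise_ofFn]
    intro a b hab
    have : ((i a : ℕ) : ℚ) < ((i b : ℕ) : ℚ) := by exact_mod_cast hi hab
    linarith
  have hSpos := vprod_pos _ hLstd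
  have hLpos := vprod_pos _ hLi
  have hcross : ∀ x : ℚ, (n : ℚ) < x →
      0 < ((baseList n).map (fun a => x - a)).prod := by
    intro x hx
    rw [base_map_prod]
    apply Finset.prod_pos
    intro k hk
    rw [Finset.mem_range] at hk
    have : ((k : ℚ)) + 1 ≤ (n : ℚ) := by exact_mod_cast hk
    linarith
  have hPt : ∀ t : Fin l, 0 < ((baseList n).map (fun a => ((n : ℚ) + i t) - a)).prod := by
    intro t
    apply hcross
    have : (1 : ℚ) ≤ i t := by exact_mod_cast hipos t
    linarith
  have hQt : ∀ t : Fin l, 0 < ((baseList n).map (fun a => ((n : ℚ) + (t : ℕ) + 1) - a)).prod := by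
    intro t
    apply hcross
    have : (0 : ℚ) ≤ (t : ℕ) := by positivity
    linarith
  have hsingle : ∀ x : ℚ, vprod (baseList n ++ [x]) =
      B * ((baseList n).map (fun a => x - a)).prod := by
    intro x
    rw [vprod_append]
    simp [vprod, hB]
  have happ : ∀ g : Fin l → ℚ, vprod (baseList n ++ List.ofFn g) =
      B * vprod (List.ofFn g) * ∏ t : Fin l, ((baseList n).map (fun a => g t - a)).prod := by
    intro g
    rw [vprod_append]
    congr 1
    rw [base_map_prod]
    have h1 : ∀ k : ℕ, ((List.ofFn g).map (fun b => b - ((k : ℚ) + 1))).prod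
        = ∏ t : Fin l, (g t - ((k : ℚ) + 1)) := by
      intro k
      rw [List.map_ofFn, List.prod_ofFn]
      rfl
    simp only [h1]
    rw [Finset.prod_comm]
    exact Finset.prod_congr rfl fun t _ => (base_map_prod n _).symm
  rw [happ, happ]
  simp only [hsingle]
  rw [Finset.prod_div_distrib]
  have hprodQ : (∏ t : Fin l, (B * ((baseList n).map
      (fun a => ((n : ℚ) + (t : ℕ) + 1) - a)).prod)) ≠ 0 :=
    Finset.prod_ne_zero_iff.2 fun t _ => (mul_pos hBpos (hQt t)).ne'
  have hprodQ' : (∏ t : Fin l, ((baseList n).map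
      (fun a => ((n : ℚ) + (t : ℕ) + 1) - a)).prod) ≠ 0 :=
    Finset.prod_ne_zero_iff.2 fun t _ => (hQt t).ne'
  rw [Finset.prod_mul_distrib, Finset.prod_mul_distrib]
  field_simp
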